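/- For every n ≥ 2 there exist a surjective SupBotHom g : Finset (Fin (2n−1)) → D(n) and a SupBotHom h : D(n) → Finset (Fin (2n−1)) such that g ∘ h = id on D(n). In other words, D(n) is a retract of the free B-module of rank 2n−1, and hence a projective B-module. -/

import Mathlib

open scoped Classical

def Sset (n : ℕ) : Set (ℕ × ℕ) :=
  {p | 1 ≤ p.1 ∧ p.1 ≤ n ∧ 1 ≤ p.2 ∧ p.2 ≤ n ∧ p.1 ≤ p.2 + 1 ∧ p.2 ≤ p.1 + 2}

/-- `S(n)` as a sublattice of `ℕ × ℕ` (componentwise max and min). -/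
def SL (n : ℕ) : Sublattice (ℕ × ℕ) where
  carrier := Sset n
  supClosed' := by
    rintro ⟨i, k⟩ h1 ⟨l, m⟩ h2
    simp only [Sset, Set.mem_setOf_eq, Prod.sup_def] at h1 h2 ⊢
    omega
  infClosed' := by
    rintro ⟨i, k⟩ h1 ⟨l, m⟩ h2
    simp only [Sset, Set.mem_setOf_eq, Prod.inf_def] at h1 h2 ⊢
    omega

/-- `D(n) = WithBot S(n)`: `S(n)` with a bottom element `O` adjoined. -/
abbrev Dn (n : ℕ) : Type := WithBot ↥(SL n)

/-- The element `a_{ik}` of `D(n)` (junk value `⊥` if `(i,k) ∉ S(n)`). -/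
noncomputable def aElt (n i k : ℕ) : Dn n :=
  if h : (i, k) ∈ SL n then (↑(⟨(i, k), h⟩ : ↥(SL n)) : Dn n) else ⊥


/-- Index function for the `2n-1` join-prime generators. -/
def Eidx (n j : ℕ) : ℕ × ℕ :=
  if j < n then (j + 1, max j 1) else (max (j - n) 1, j - n + 2)

lemma Eidx_mem (n : ℕ) (hn : 2 ≤ n) (j : ℕ) (hj : j < 2 * n - 1) :
    Eidx n j ∈ SL n := by
  show Eidx n j ∈ Sset n
  unfold Eidx Sset
  split <;> simp only [Set.mem_setOf_eq] <;> omega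

lemma Eidx_prime (n : ℕ) (hn : 2 ≤ n) (j : ℕ) (hj : j < 2 * n - 1)
    (a b : ℕ × ℕ) (ha : a ∈ Sset n) (hb : b ∈ Sset n)
    (h : Eidx n j ≤ a ⊔ b) : Eidx n j ≤ a ∨ Eidx n j ≤ b := by
  obtain ⟨a1, a2⟩ := a
  obtain ⟨b1, b2⟩ := b
  simp only [Sset, Set.mem_setOf_eq] at ha hb
  by_cases hjn : j < n <;>
    simp only [Eidx, hjn, if_true, if_false, ite_true, ite_false, Prod.sup_def, Prod.le_def] at h ⊢ <;>
    omega

theorem stmt1 (n : ℕ) (hn : 2 ≤ n) :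
    ∃ (g : SupBotHom (Finset (Fin (2 * n - 1))) (Dn n))
      (h : SupBotHom (Dn n) (Finset (Fin (2 * n - 1)))),
      Function.Surjective g ∧ ∀ x, g (h x) = x := by
  classical
  set E : Fin (2 * n - 1) → ↥(SL n) :=
    fun j => ⟨Eidx n j, Eidx_mem n hn j j.isLt⟩ with hE
  -- the key primality property, lifted to `Dn n`
  have key : ∀ (j : Fin (2 * n - 1)) (x y : Dn n),
      ((E j : Dn n) ≤ x ⊔ y ↔ ((E j : Dn n) ≤ x ∨ (E j : Dn n) ≤ y)) := by
    intro j x y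
    induction x using WithBot.recBotCoe with
    | bot => simp
    | coe a =>
      induction y using WithBot.recBotCoe with
      | bot => simp
      | coe b =>
        rw [← WithBot.coe_sup]
        simp only [WithBot.coe_le_coe]
        constructor
        · intro hle
          exact Eidx_prime n hn j j.isLt a b a.2 b.2 hle
        · rintro (h | h)
          · exact le_sup_of_le_left h
          · exact le_sup_of_le_right h
  have hret : ∀ x : Dn n,
      Finset.sup (Finset.univ.filter (fun j => (E j : Dn n) ≤ x))
        (fun j => (E j : Dn n)) = x := by
    intro x
    induction x using WithBot.recBotCoe with
    | bot =>
      rw [Finset.filter_false_of_mem, Finset.sup_empty]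
      intro j _
      exact WithBot.not_coe_le_bot _
    | coe a =>
      apply le_antisymm
      · refine Finset.sup_le fun j hj => ?_
        exact (Finset.mem_filter.mp hj).2
      · obtain ⟨i, k, ha, rfl⟩ :
            ∃ i k, ∃ ha : (i, k) ∈ SL n, a = ⟨(i, k), ha⟩ :=
          ⟨a.1.1, a.1.2, a.2, rfl⟩
        have hik : 1 ≤ i ∧ i ≤ n ∧ 1 ≤ k ∧ k ≤ n ∧ i ≤ k + 1 ∧ k ≤ i + 2 := ha
        have hj1lt : i - 1 < 2 * n - 1 := by omega
        set j2v : ℕ := if k ≤ 1 then i - 1 else n + k - 2 with hj2v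
        have hj2lt : j2v < 2 * n - 1 := by rw [hj2v]; split <;> omega
        set j1 : Fin (2 * n - 1) := ⟨i - 1, hj1lt⟩ with hj1
        set j2 : Fin (2 * n - 1) := ⟨j2v, hj2lt⟩ with hj2
        have hE1 : (E j1 : ℕ × ℕ) ≤ (i, k) := by
          show Eidx n (i - 1) ≤ (i, k)
          have : i - 1 < n := by omega
          simp only [Eidx, if_pos this, Prod.mk_le_mk]
          omega
        have hE2 : (E j2 : ℕ × ℕ) ≤ (i, k) := by
          show Eidx n j2v ≤ (i, k)
          rw [hj2v]
          by_cases hk : k ≤ 1 <;>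
            simp only [hk, if_true, if_false, ite_true, ite_false, Eidx] <;>
            (try split) <;>
            simp only [Prod.mk_le_mk, Prod.sup_def] <;>
            omega
        have hle : ((i, k) : ℕ × ℕ) ≤ (E j1 : ℕ × ℕ) ⊔ (E j2 : ℕ × ℕ) := by
          show ((i, k) : ℕ × ℕ) ≤ Eidx n (i - 1) ⊔ Eidx n j2v
          have h1 : i - 1 < n := by omega
          rw [hj2v]
          by_cases hk : k ≤ 1 <;>
            simp only [hk, if_true, if_false, ite_true, ite_false, Eidx,
              if_pos h1] <;>
            (try split) <;>
            simp only [Prod.mk_le_mk, Prod.sup_def] <;>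
            omega
        have hm1 : j1 ∈ Finset.univ.filter
            (fun j => (E j : Dn n) ≤ (⟨(i, k), ha⟩ : ↥(SL n))) := by
          simp only [Finset.mem_filter, Finset.mem_univ, true_and,
            WithBot.coe_le_coe]
          exact hE1
        have hm2 : j2 ∈ Finset.univ.filter
            (fun j => (E j : Dn n) ≤ (⟨(i, k), ha⟩ : ↥(SL n))) := by
          simp only [Finset.mem_filter, Finset.mem_univ, true_and,
            WithBot.coe_le_coe]
          exact hE2
        calc ((⟨(i, k), ha⟩ : ↥(SL n)) : Dn n)
            ≤ (E j1 : Dn n) ⊔ (E j2 : Dn n) := by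
              rw [← WithBot.coe_sup, WithBot.coe_le_coe]
              exact hle
          _ ≤ _ := sup_le (Finset.le_sup (f := fun j => (E j : Dn n)) hm1)
              (Finset.le_sup (f := fun j => (E j : Dn n)) hm2)
  refine ⟨⟨⟨fun s => s.sup (fun j => (E j : Dn n)), fun s t => ?_⟩, rfl⟩,
    ⟨⟨fun x => Finset.univ.filter (fun j => (E j : Dn n) ≤ x), fun x y => ?_⟩, ?_⟩,
    fun x => ⟨Finset.univ.filter (fun j => (E j : Dn n) ≤ x), hret x⟩, hret⟩
  · show (s ∪ t).sup _ = _
    exact Finset.sup_union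
  · show Finset.filter _ _ = Finset.filter _ _ ∪ Finset.filter _ _
    ext j
    simp [key j x y, or_and_right]
  · show Finset.filter _ _ = ⊥
    ext j
    simp [WithBot.not_coe_le_bot]
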